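/- If f : G → H is a full surjective graph homomorphism, then there is a unique full surjective homomorphism g : H → Ĝ with g ∘ f = r_G, where Ĝ is the reduced form of G and r_G : v ↦ N(v) the canonical map. In particular, f(u) = f(v) implies N(u) = N(v). -/

import Mathlib

/-- A full homomorphism between simple graphs: adjacency is both preserved and
reflected. -/
def IsFullHom {V W : Type*} (G : SimpleGraph V) (H : SimpleGraph W) (f : V → W) : Prop :=
  ∀ u v, G.Adj u v ↔ H.Adj (f u) (f v)

/-- A graph is reduced if distinct vertices have distinct neighborhoods. -/
def Reduced {V : Type*} (G : SimpleGraph V) : Prop :=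
  ∀ u v : V, G.neighborSet u = G.neighborSet v → u = v

/-- The reduced form of G: vertices are the neighborhoods of vertices of G, with
N(u) adjacent to N(v) iff u and v are adjacent in G. -/
def ReducedForm {V : Type*} (G : SimpleGraph V) :
    SimpleGraph {s : Set V // ∃ v, s = G.neighborSet v} where
  Adj s t := ∃ u v, (s : Set V) = G.neighborSet u ∧ (t : Set V) = G.neighborSet v ∧ G.Adj u v
  symm := by
    constructor
    rintro s t ⟨u, v, hu, hv, h⟩
    exact ⟨v, u, hv, hu, h.symm⟩
  loopless := by
    constructor
    rintro s ⟨u, v, hu, hv, h⟩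
    have h2 : v ∈ G.neighborSet u := h
    rw [hu.symm.trans hv] at h2
    exact G.loopless.irrefl v h2

/-- If f : G → H is a full surjective homomorphism, then there is a unique full
surjective homomorphism g : H → Ĝ with g ∘ f = r_G; in particular f(u) = f(v)
implies N(u) = N(v). -/
theorem fullSurjection_factors {V W : Type*} (G : SimpleGraph V) (H : SimpleGraph W)
    (f : V → W) (hfull : IsFullHom G H f) (hsurj : Function.Surjective f) :
    (∃! g : W → {s : Set V // ∃ v, s = G.neighborSet v},
        IsFullHom H (ReducedForm G) g ∧ Function.Surjective g ∧
        g ∘ f = fun v => ⟨G.neighborSet v, v, rfl⟩) ∧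
    (∀ u v : V, f u = f v → G.neighborSet u = G.neighborSet v) := by

  have key : ∀ u v : V, f u = f v → G.neighborSet u = G.neighborSet v := by
    intro u v h
    ext w
    simp only [SimpleGraph.mem_neighborSet]
    rw [hfull u w, hfull v w, h]
  classical
  refine ⟨?_, key⟩
  set g : W → {s : Set V // ∃ v, s = G.neighborSet v} :=
    fun w => ⟨G.neighborSet (hsurj w).choose, (hsurj w).choose, rfl⟩ with hg
  have hgf : ∀ v : V, g (f v) = ⟨G.neighborSet v, v, rfl⟩ := by
    intro v
    have := key _ _ ((hsurj (f v)).choose_spec)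
    exact Subtype.ext this
  refine ⟨g, ⟨?_, ?_, funext hgf⟩, ?_⟩
  · intro a b
    obtain ⟨u, hu⟩ := hsurj a
    obtain ⟨v, hv⟩ := hsurj b
    subst hu hv
    rw [hgf, hgf]
    constructor
    · intro h
      exact ⟨u, v, rfl, rfl, (hfull u v).2 h⟩
    · rintro ⟨u', v', hu', hv', h⟩
      simp only at hu' hv'
      have h1 : v' ∈ G.neighborSet u := by rw [hu']; exact h
      have h2 : u ∈ G.neighborSet v := by rw [hv']; exact G.adj_symm h1
      exact (hfull u v).1 ((G.adj_symm h2))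
  · rintro ⟨s, v, rfl⟩
    exact ⟨f v, hgf v⟩
  · rintro g' ⟨_, _, hg'f⟩
    funext w
    obtain ⟨v, rfl⟩ := hsurj w
    rw [hgf]
    exact congrFun hg'f v
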